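/- Monotonicity of max- and min-QFI under a-majorization: if p and q are supported-below probability distributions on ℤ with p ≻_a q, then F_max(p) ≥ F_max(q) and F_min(p) ≥ F_min(q) (as values in [0,∞]). -/

import Mathlib

/-- Convolution of two sequences on `ℤ`: `(a*b)(n) = ∑_{k∈ℤ} a(k)·b(n−k)`.
For supported-below sequences this `tsum` has finitely many nonzero terms. -/
noncomputable def conv (a b : ℤ → ℝ) : ℤ → ℝ := fun n => ∑' k : ℤ, a k * b (n - k)

/-- A sequence is supported below if it vanishes for all sufficiently negative indices. -/
def SuppBelow (a : ℤ → ℝ) : Prop := ∃ N : ℤ, ∀ n : ℤ, n < N → a n = 0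

/-- A probability distribution on `ℤ`: nonnegative with total sum 1. -/
def IsProbDist (p : ℤ → ℝ) : Prop := (∀ n : ℤ, 0 ≤ p n) ∧ HasSum p 1

/-- `qt` is the reciprocal sequence `q̃` of `q`, relative to `nstar = n_*(q)`,
the least index where `q` is positive: `q̃` vanishes below `−n_*(q)` and
`(q̃*q)(n) = δ_{n,0}` for all `n`. -/
def IsRecip (q qt : ℤ → ℝ) (nstar : ℤ) : Prop :=
  IsLeast {n : ℤ | 0 < q n} nstar ∧ (∀ n : ℤ, n < -nstar → qt n = 0) ∧
  (∀ n : ℤ, conv qt q n = if n = 0 then (1 : ℝ) else 0)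

/-- The generalized Poisson sequence `P_λ : ℤ → ℝ`,
`P_λ(n) = e^{−λ}·λ^n/n!` for `n ≥ 0` and `P_λ(n) = 0` for `n < 0`. -/
noncomputable def poisson (lam : ℝ) : ℤ → ℝ :=
  fun n => if 0 ≤ n then Real.exp (-lam) * lam ^ n.toNat / (Nat.factorial n.toNat : ℝ) else 0

/-- The max-QFI `F_max(p) = inf{4λ | λ ≥ 0, P_λ ≻_a p} ∈ [0,∞]` (with
`inf ∅ = ∞`).  Since `P_λ ≻_a p` means `(P_λ * p̃)(n) ≥ 0` for all `n`, it is
expressed through the reciprocal sequence `pt = p̃` of `p`. -/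
noncomputable def Fmax (pt : ℤ → ℝ) : ENNReal :=
  sInf {x : ENNReal | ∃ lam : ℝ, 0 ≤ lam ∧
    (∀ n : ℤ, 0 ≤ conv (poisson lam) pt n) ∧ x = ENNReal.ofReal (4 * lam)}

/-- The min-QFI `F_min(p) = sup{4λ | λ ≥ 0, p ≻_a P_λ} ∈ [0,∞]`.  Since
`P̃_λ = P_{−λ}`, the condition `p ≻_a P_λ` reads `(p * P_{−λ})(n) ≥ 0`. -/
noncomputable def Fmin (p : ℤ → ℝ) : ENNReal :=
  sSup {x : ENNReal | ∃ lam : ℝ, 0 ≤ lam ∧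
    (∀ n : ℤ, 0 ≤ conv p (poisson (-lam)) n) ∧ x = ENNReal.ofReal (4 * lam)}

/-- Package a supported-below sequence as a Hahn series over `ℤ`. -/
noncomputable def toH (a : ℤ → ℝ) (N : ℤ) (h : ∀ n : ℤ, n < N → a n = 0) :
    HahnSeries ℤ ℝ :=
  ⟨a, by
    have hbdd : BddBelow (Function.support a) := by
      refine ⟨N, fun x hx => ?_⟩
      by_contra hlt
      exact hx (h x (lt_of_not_ge hlt))
    exact Set.IsWF.isPWO hbdd.wellFoundedOn_lt⟩

@[simp] lemma toH_coeff (a : ℤ → ℝ) (N : ℤ) (h : ∀ n : ℤ, n < N → a n = 0) :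
    (toH a N h).coeff = a := rfl

/-- Convolution of supported-below sequences equals the Hahn series product. -/
lemma conv_eq_toH (a b : ℤ → ℝ) (Na Nb : ℤ) (ha : ∀ n : ℤ, n < Na → a n = 0)
    (hb : ∀ n : ℤ, n < Nb → b n = 0) (n : ℤ) :
    conv a b n = (toH a Na ha * toH b Nb hb).coeff n := by
  classical
  rw [HahnSeries.coeff_mul]
  set S := Finset.antidiagonal (toH a Na ha).isPWO_support (toH b Nb hb).isPWO_support n
    with hS
  have hmem : ∀ ij : ℤ × ℤ, ij ∈ S ↔ a ij.1 ≠ 0 ∧ b ij.2 ≠ 0 ∧ ij.1 + ij.2 = n := by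
    intro ij
    simp [hS, Finset.mem_antidiagonal, HahnSeries.support, Function.mem_support, toH_coeff]
  have h1 : conv a b n = ∑ k ∈ S.image Prod.fst, a k * b (n - k) := by
    refine tsum_eq_sum ?_
    intro k hk
    by_contra hne
    have ha' : a k ≠ 0 := fun h0 => hne (by simp [h0])
    have hb' : b (n - k) ≠ 0 := fun h0 => hne (by simp [h0])
    exact hk (Finset.mem_image.2 ⟨(k, n - k), (hmem _).2 ⟨ha', hb', by ring⟩, rfl⟩)
  rw [h1]
  rw [Finset.sum_image]
  · refine Finset.sum_congr rfl fun ij hij => ?_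
    have := ((hmem ij).1 hij).2.2
    have h2 : n - ij.1 = ij.2 := by omega
    rw [toH_coeff, toH_coeff, h2]
  · intro x hx y hy hxy
    have hx' := ((hmem x).1 hx).2.2
    have hy' := ((hmem y).1 hy).2.2
    exact Prod.ext hxy (by omega)

lemma mul_coeff_nonneg {x y : HahnSeries ℤ ℝ} (hx : ∀ n : ℤ, 0 ≤ x.coeff n)
    (hy : ∀ n : ℤ, 0 ≤ y.coeff n) (n : ℤ) : 0 ≤ (x * y).coeff n := by
  rw [HahnSeries.coeff_mul]
  exact Finset.sum_nonneg fun ij _ => mul_nonneg (hx _) (hy _)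

lemma poisson_supp (lam : ℝ) : ∀ n : ℤ, n < 0 → poisson lam n = 0 := by
  intro n hn
  simp [poisson, not_le.2 hn]

/-- monotonicity of max- and min-QFI under a-majorization:
if `p ≻_a q` for supported-below probability distributions `p, q`, then
`F_max(p) ≥ F_max(q)` and `F_min(p) ≥ F_min(q)` in `[0,∞]`. -/
theorem qfi_monotone (p q pt qt : ℤ → ℝ) (np nq : ℤ)
    (hp : IsProbDist p) (hq : IsProbDist q)
    (hpb : SuppBelow p) (hqb : SuppBelow q)
    (hpt : IsRecip p pt np) (hqt : IsRecip q qt nq)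
    (hmaj : ∀ n : ℤ, 0 ≤ conv p qt n) :
    Fmax qt ≤ Fmax pt ∧ Fmin q ≤ Fmin p := by
  have hp0 : ∀ n : ℤ, n < np → p n = 0 := by
    intro n hn
    rcases (hp.1 n).eq_or_lt with h | h
    · exact h.symm
    · exact absurd (hpt.1.2 h) (not_le.2 hn)
  have hq0 : ∀ n : ℤ, n < nq → q n = 0 := by
    intro n hn
    rcases (hq.1 n).eq_or_lt with h | h
    · exact h.symm
    · exact absurd (hqt.1.2 h) (not_le.2 hn)
  set P : HahnSeries ℤ ℝ := toH p np hp0 with hP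
  set T : HahnSeries ℤ ℝ := toH pt (-np) hpt.2.1 with hT
  set Q : HahnSeries ℤ ℝ := toH q nq hq0 with hQ
  set S : HahnSeries ℤ ℝ := toH qt (-nq) hqt.2.1 with hTS
  have hTP : T * P = 1 := by
    ext n
    rw [← conv_eq_toH, hpt.2.2 n, HahnSeries.coeff_one]
    split <;> rfl
  have hSQ : S * Q = 1 := by
    ext n
    rw [← conv_eq_toH, hqt.2.2 n, HahnSeries.coeff_one]
    split <;> rfl
  have hPS : ∀ n : ℤ, 0 ≤ (P * S).coeff n := by
    intro n
    rw [← conv_eq_toH]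
    exact hmaj n
  constructor
  · -- Fmax
    apply sInf_le_sInf
    rintro x ⟨lam, hlam, hconv, hx⟩
    refine ⟨lam, hlam, ?_, hx⟩
    intro n
    set X : HahnSeries ℤ ℝ := toH (poisson lam) 0 (poisson_supp lam) with hX
    have hXT : ∀ m : ℤ, 0 ≤ (X * T).coeff m := by
      intro m
      rw [← conv_eq_toH]
      exact hconv m
    have key : (X * T) * (P * S) = X * S := by
      rw [mul_assoc, ← mul_assoc T, hTP, one_mul]
    have : 0 ≤ (X * S).coeff n := by
      rw [← key]
      exact mul_coeff_nonneg hXT hPS n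
    rw [conv_eq_toH (poisson lam) qt 0 (-nq) (poisson_supp lam) hqt.2.1 n]
    exact this
  · -- Fmin
    apply sSup_le_sSup
    rintro x ⟨lam, hlam, hconv, hx⟩
    refine ⟨lam, hlam, ?_, hx⟩
    intro n
    set Y : HahnSeries ℤ ℝ := toH (poisson (-lam)) 0 (poisson_supp (-lam)) with hY
    have hQY : ∀ m : ℤ, 0 ≤ (Q * Y).coeff m := by
      intro m
      rw [← conv_eq_toH]
      exact hconv m
    have key : (P * S) * (Q * Y) = P * Y := by
      rw [mul_assoc, ← mul_assoc S, hSQ, one_mul]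
    have : 0 ≤ (P * Y).coeff n := by
      rw [← key]
      exact mul_coeff_nonneg hPS hQY n
    rw [conv_eq_toH p (poisson (-lam)) np 0 hp0 (poisson_supp (-lam)) n]
    exact this
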